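/- Scalar version of Theorem 1.5 (inversion of 1+m for smoothing Mellin symbols with asymptotics): for every Mellin asymptotic type R and every m ∈ M^{−∞}_R there exist a Mellin asymptotic type S and a function l ∈ M^{−∞}_S such that (1+m(z))·(1+l(z)) = 1 for all z ∈ ℂ ∖ (R ∪ S). -/

import Mathlib

open Complex

/-- A Mellin asymptotic type: a subset of `ℂ` meeting every vertical strip
`{c ≤ Re z ≤ c'}` in a finite set. -/
def IsMellinAsymType (D : Set ℂ) : Prop :=
  ∀ c c' : ℝ, c ≤ c' → (D ∩ {z : ℂ | c ≤ z.re ∧ z.re ≤ c'}).Finite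

/-- The class `M^{-∞}_D` (scalar case): functions holomorphic off `D`,
meromorphic at every point of `D`, and rapidly decreasing on every vertical
strip for large `|Im z|`. -/
def MellinSmoothing (D : Set ℂ) (m : ℂ → ℂ) : Prop :=
  DifferentiableOn ℂ m Dᶜ ∧
  (∀ d ∈ D, MeromorphicAt m d) ∧
  ∀ a b : ℝ, ∀ N : ℕ, ∃ C ρ₀ : ℝ, ∀ β ∈ Set.Icc a b, ∀ ρ : ℝ, ρ₀ ≤ |ρ| →
    ‖m ((β : ℂ) + ρ * Complex.I)‖ ≤ C * (1 + |ρ|) ^ (-(N : ℝ))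

open Filter Topology Metric Set in
/-- If a function is meromorphic at `x` and vanishes frequently near `x`, then it vanishes
on a punctured neighbourhood of `x`. -/
private lemma merom_eventually_zero {f : ℂ → ℂ} {x : ℂ} (hf : MeromorphicAt f x)
    (h : ∃ᶠ z in 𝓝[≠] x, f z = 0) : ∀ᶠ z in 𝓝[≠] x, f z = 0 := by
  obtain ⟨n, hn⟩ := hf
  rcases hn.eventually_eq_zero_or_eventually_ne_zero with h0 | h1
  · have h0' : ∀ᶠ z in 𝓝[≠] x, (z - x) ^ n • f z = 0 := h0.filter_mono nhdsWithin_le_nhds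
    rw [eventually_nhdsWithin_iff] at h0' ⊢
    filter_upwards [h0'] with z hz hzx
    rcases smul_eq_zero.mp (hz hzx) with h3 | h3
    · exact absurd h3 (pow_ne_zero _ (sub_ne_zero.mpr hzx))
    · exact h3
  · exfalso
    obtain ⟨z, hz1, hz2⟩ := (h1.and_frequently h).exists
    exact hz1 (by rw [hz2, smul_zero])

open Filter Topology Metric Set in
/-- Inversion of `1+m` for smoothing Mellin symbols with asymptotics
(scalar version): for every `m ∈ M^{-∞}_R` there are an asymptotic type `S`
and `l ∈ M^{-∞}_S` with `(1+m)(1+l) = 1` off `R ∪ S`. -/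
theorem inverse_of_one_add_smoothing_mellin_symbol
    (R : Set ℂ) (hR : IsMellinAsymType R) (m : ℂ → ℂ)
    (hm : MellinSmoothing R m) :
    ∃ S : Set ℂ, IsMellinAsymType S ∧ ∃ l : ℂ → ℂ, MellinSmoothing S l ∧
      ∀ z : ℂ, z ∉ R ∪ S → (1 + m z) * (1 + l z) = 1 := by
  obtain ⟨hdiff, hmero, hdecay⟩ := hm
  -- `R` meets every set with bounded real part in a finite set
  have hRfin : ∀ r : ℝ, (R ∩ {z : ℂ | |z.re| ≤ r}).Finite := by
    intro r
    refine (hR (-|r|) |r| (neg_le_self (abs_nonneg r))).subset ?_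
    rintro z ⟨hz1, hz2⟩
    have h1 : |z.re| ≤ |r| := hz2.trans (le_abs_self r)
    exact ⟨hz1, (abs_le.mp h1).1, (abs_le.mp h1).2⟩
  -- `R` is closed
  have hRcl : IsClosed R := by
    rw [← isOpen_compl_iff, Metric.isOpen_iff]
    intro x hx
    have hfin := hRfin (|x.re| + 1)
    have hxF : x ∈ (R ∩ {z : ℂ | |z.re| ≤ |x.re| + 1})ᶜ := fun h => hx h.1
    obtain ⟨ε, hε, hball⟩ := Metric.isOpen_iff.mp hfin.isClosed.isOpen_compl x hxF
    refine ⟨min ε 1, lt_min hε one_pos, fun z hz => ?_⟩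
    intro hzR
    have hd : dist z x < min ε 1 := hz
    have h1 : z ∈ ball x ε := lt_of_lt_of_le hd (min_le_left _ _)
    refine hball h1 ⟨hzR, ?_⟩
    have h2 : |z.re - x.re| ≤ dist z x := by
      have := Complex.abs_re_le_norm (z - x)
      rw [Complex.sub_re] at this
      rwa [Complex.dist_eq]
    have h3 : |z.re| - |x.re| ≤ |z.re - x.re| := abs_sub_abs_le_abs_sub _ _
    have h4 : dist z x < 1 := lt_of_lt_of_le hd (min_le_right _ _)
    show |z.re| ≤ |x.re| + 1
    linarith
  have hRo : IsOpen Rᶜ := hRcl.isOpen_compl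
  -- `R` is countable
  have hRcnt : R.Countable := by
    have hsub : R ⊆ ⋃ n : ℕ, (R ∩ {z : ℂ | |z.re| ≤ n}) := by
      intro z hz
      obtain ⟨n, hn⟩ := exists_nat_ge |z.re|
      exact mem_iUnion.2 ⟨n, hz, hn⟩
    exact (Set.countable_iUnion fun n : ℕ => (hRfin n).countable).mono hsub
  have hconn : IsPreconnected Rᶜ :=
    (hRcnt.isConnected_compl_of_one_lt_rank
      (Complex.rank_real_complex ▸ Nat.one_lt_ofNat)).isPreconnected
  -- `m` is meromorphic everywhere
  have hmAt : ∀ x : ℂ, MeromorphicAt m x := by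
    intro x
    by_cases hx : x ∈ R
    · exact hmero x hx
    · exact ((hdiff.analyticOnNhd hRo) x hx).meromorphicAt
  have hanal : AnalyticOnNhd ℂ (fun z => 1 + m z) Rᶜ :=
    fun x hx => analyticAt_const.add ((hdiff.analyticOnNhd hRo) x hx)
  -- `m` is small high up in every strip
  have hsmall : ∀ a b : ℝ, ∃ ρ₁ : ℝ, 0 ≤ ρ₁ ∧
      ∀ z : ℂ, z.re ∈ Icc a b → ρ₁ ≤ |z.im| → ‖m z‖ ≤ 1 / 2 := by
    intro a b
    obtain ⟨C, ρ₀, hC⟩ := hdecay a b 1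
    refine ⟨max ρ₀ (max (2 * C) 0), le_max_of_le_right (le_max_right _ _), fun z hz hz' => ?_⟩
    have h1 : ρ₀ ≤ |z.im| := le_trans (le_max_left _ _) hz'
    have h2 := hC z.re hz z.im h1
    rw [Complex.re_add_im] at h2
    have h3 : (1 + |z.im| : ℝ) ^ (-((1 : ℕ) : ℝ)) = (1 + |z.im|)⁻¹ := by
      norm_num [Real.rpow_neg_one]
    rw [h3] at h2
    have h4 : 2 * C ≤ |z.im| := le_trans (le_max_of_le_right (le_max_left _ _)) hz'
    have h5 : (0:ℝ) < 1 + |z.im| := by positivity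
    have h6 : (1 + |z.im| : ℝ)⁻¹ * (1 + |z.im|) = 1 := inv_mul_cancel₀ (ne_of_gt h5)
    have h7 : (0:ℝ) < (1 + |z.im|)⁻¹ := inv_pos.mpr h5
    nlinarith [h2]
  -- the zero set of `1 + m` away from `R`
  set Z : Set ℂ := {z : ℂ | z ∉ R ∧ 1 + m z = 0} with hZdef
  -- a point where `1 + m` does not vanish
  have hpt : ∃ w : ℂ, w ∉ R ∧ 1 + m w ≠ 0 := by
    obtain ⟨ρ₁, hρ₁0, hs⟩ := hsmall 0 0
    have hfin : ((fun z : ℂ => z.im) '' (R ∩ {z : ℂ | 0 ≤ z.re ∧ z.re ≤ 0})).Finite :=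
      (hR 0 0 le_rfl).image _
    obtain ⟨ρ, hρ1, hρ2⟩ := (Set.Ici_infinite ρ₁).exists_notMem_finite hfin
    refine ⟨(ρ : ℂ) * Complex.I, ?_, ?_⟩
    · intro hmem
      exact hρ2 ⟨(ρ : ℂ) * Complex.I, ⟨hmem, by simp⟩, by simp⟩
    · intro h0
      have hre : ((ρ : ℂ) * Complex.I).re = 0 := by simp
      have him : ((ρ : ℂ) * Complex.I).im = ρ := by simp
      have h1 : ‖m ((ρ : ℂ) * Complex.I)‖ ≤ 1 / 2 := by
        refine hs _ (by rw [hre]; exact ⟨le_rfl, le_rfl⟩) ?_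
        rw [him]
        exact le_trans (mem_Ici.mp hρ1) (le_abs_self ρ)
      have h2 : m ((ρ : ℂ) * Complex.I) = -1 := by linear_combination h0
      rw [h2] at h1
      norm_num at h1
  -- zeros of `1 + m` off `R` are finite in every compact set
  have hZfin : ∀ K : Set ℂ, IsCompact K → (Z ∩ K).Finite := by
    intro K hK
    by_contra hinf
    rw [← Set.not_infinite, not_not] at hinf
    obtain ⟨x, hxK, hacc⟩ := hinf.exists_accPt_of_subset_isCompact hK inter_subset_right
    rw [accPt_iff_frequently] at hacc
    have hfreq : ∃ᶠ z in 𝓝[≠] x, 1 + m z = 0 := by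
      rw [frequently_nhdsWithin_iff]
      exact hacc.mono fun z hz => ⟨hz.2.1.2, hz.1⟩
    have hev := merom_eventually_zero ((MeromorphicAt.const 1 x).add (hmAt x)) hfreq
    rw [eventually_nhdsWithin_iff, Metric.eventually_nhds_iff] at hev
    obtain ⟨ε, hε, hball⟩ := hev
    -- choose `w = x + t i` in the punctured ball, avoiding `R`
    have hinj : Function.Injective (fun t : ℝ => x + (t : ℂ) * Complex.I) := by
      intro s t h
      have := congrArg Complex.im h
      simpa using this
    have hTbad : ((fun t : ℝ => x + (t : ℂ) * Complex.I) ⁻¹'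
        (R ∩ {z : ℂ | |z.re| ≤ |x.re|})).Finite :=
      (hRfin |x.re|).preimage hinj.injOn
    obtain ⟨t, ht, htR⟩ := (Set.Ioo_infinite (lt_min hε one_pos)).exists_notMem_finite hTbad
    set w : ℂ := x + (t : ℂ) * Complex.I with hw
    have him : w.im = x.im + t := by simp [hw]
    have hre : w.re = x.re := by simp [hw]
    have ht0 : 0 < t := ht.1
    have htε : t < ε := lt_of_lt_of_le ht.2 (min_le_left _ _)
    have hwx : w ≠ x := by
      intro h
      have := congrArg Complex.im h
      rw [him] at this
      linarith
    have hwR : w ∉ R := fun h => htR ⟨h, by rw [mem_setOf_eq, hre]⟩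
    have hdwx : dist w x = t := by
      rw [Complex.dist_eq]
      have hsub2 : w - x = (t : ℂ) * Complex.I := by rw [hw]; ring
      rw [hsub2]
      simp [abs_of_pos ht0]
    -- `1 + m` vanishes identically near `w`
    have hfw : ∃ᶠ z in 𝓝[≠] w, (fun y => 1 + m y) z = 0 := by
      apply Filter.Eventually.frequently
      rw [eventually_nhdsWithin_iff]
      have hδ : (0:ℝ) < min t (ε - t) := lt_min ht0 (by linarith)
      filter_upwards [Metric.ball_mem_nhds w hδ] with z hzball _
      have hz1 : dist z w < min t (ε - t) := hzball
      have hz2 : dist z x < ε := by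
        calc dist z x ≤ dist z w + dist w x := dist_triangle _ _ _
          _ < (ε - t) + t := by
              have := lt_of_lt_of_le hz1 (min_le_right _ _)
              rw [hdwx]; linarith
          _ = ε := by ring
      have hz3 : z ≠ x := by
        intro h
        rw [h] at hz1
        have h4 : dist x w = t := by rw [dist_comm]; exact hdwx
        rw [h4] at hz1
        exact absurd (lt_of_lt_of_le hz1 (min_le_left _ _)) (lt_irrefl t)
      exact hball hz2 hz3
    have heq := hanal.eqOn_zero_of_preconnected_of_frequently_eq_zero hconn hwR hfw
    obtain ⟨w₀, hw₀R, hw₀⟩ := hpt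
    exact hw₀ (heq hw₀R)
  -- the candidate inverse
  refine ⟨R ∪ Z, ?_, fun z => (1 + m z)⁻¹ - 1, ⟨?_, ?_, ?_⟩, ?_⟩
  · -- `R ∪ Z` is an asymptotic type
    intro c c' hcc
    rw [union_inter_distrib_right]
    refine (hR c c' hcc).union ?_
    obtain ⟨ρ₁, hρ₁0, hs⟩ := hsmall c c'
    set K : Set ℂ := Complex.re ⁻¹' Icc c c' ∩ Complex.im ⁻¹' Icc (-ρ₁) ρ₁ with hK
    have hKc : IsCompact K := by
      apply Metric.isCompact_of_isClosed_isBounded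
      · exact (isClosed_Icc.preimage Complex.continuous_re).inter
          (isClosed_Icc.preimage Complex.continuous_im)
      · rw [Metric.isBounded_iff_subset_closedBall 0]
        refine ⟨max |c| |c'| + ρ₁, fun z hz => ?_⟩
        rw [Metric.mem_closedBall, dist_zero_right]
        have h1 : |z.re| ≤ max |c| |c'| := by
          rcases hz.1 with ⟨h1, h2⟩
          rw [abs_le]
          constructor
          · calc -(max |c| |c'|) ≤ -|c| := neg_le_neg (le_max_left _ _)
              _ ≤ c := neg_abs_le c
              _ ≤ z.re := h1
          · exact h2.trans ((le_abs_self c').trans (le_max_right _ _))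
        have h2 : |z.im| ≤ ρ₁ := abs_le.mpr hz.2
        calc ‖z‖ ≤ |z.re| + |z.im| := Complex.norm_le_abs_re_add_abs_im z
          _ ≤ max |c| |c'| + ρ₁ := add_le_add h1 h2
    refine (hZfin K hKc).subset ?_
    rintro z ⟨hzZ, hzst⟩
    have h0 : 1 + m z = 0 := hzZ.2
    refine ⟨hzZ, ⟨⟨hzst.1, hzst.2⟩, ?_⟩⟩
    rw [Set.mem_preimage, Set.mem_Icc, ← abs_le]
    by_contra hgt
    push_neg at hgt
    have h1 : ‖m z‖ ≤ 1 / 2 := hs z ⟨hzst.1, hzst.2⟩ (le_of_lt hgt)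
    have h2 : m z = -1 := by linear_combination h0
    rw [h2] at h1
    norm_num at h1
  · -- differentiability off `R ∪ Z`
    have hcont : ContinuousOn (fun z => 1 + m z) Rᶜ :=
      continuousOn_const.add hdiff.continuousOn
    have hU : IsOpen (Rᶜ ∩ (fun z => 1 + m z) ⁻¹' {(0:ℂ)}ᶜ) :=
      hcont.isOpen_inter_preimage hRo isOpen_compl_singleton
    have hd1 : DifferentiableOn ℂ (fun z => (1 + m z)⁻¹ - 1)
        (Rᶜ ∩ (fun z => 1 + m z) ⁻¹' {(0:ℂ)}ᶜ) := by
      refine DifferentiableOn.sub ?_ (differentiableOn_const 1)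
      exact ((differentiableOn_const 1).add (hdiff.mono inter_subset_left)).inv
        fun x hx => hx.2
    refine hd1.mono ?_
    intro z hz
    rw [Set.mem_compl_iff, Set.mem_union] at hz
    push_neg at hz
    refine ⟨hz.1, fun h0 => hz.2 ⟨hz.1, h0⟩⟩
  · -- meromorphy at points of `R ∪ Z`
    intro d _
    exact (((MeromorphicAt.const 1 d).add (hmAt d)).inv).sub (MeromorphicAt.const 1 d)
  · -- decay on strips
    intro a b N
    obtain ⟨C, ρ₀, hC⟩ := hdecay a b N
    obtain ⟨ρ₁, hρ₁0, hs⟩ := hsmall a b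
    refine ⟨2 * |C|, max ρ₀ ρ₁, ?_⟩
    intro β hβ ρ hρ
    set z : ℂ := (β : ℂ) + (ρ : ℂ) * Complex.I with hz
    have hre : z.re = β := by simp [hz]
    have him : z.im = ρ := by simp [hz]
    have h1 : ‖m z‖ ≤ 1 / 2 := by
      refine hs z (by rw [hre]; exact hβ) ?_
      rw [him]
      exact le_trans (le_max_right _ _) hρ
    have h2 : ‖m z‖ ≤ C * (1 + |ρ|) ^ (-(N : ℝ)) := hC β hβ ρ (le_trans (le_max_left _ _) hρ)
    have hne : 1 + m z ≠ 0 := by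
      intro h0
      have h3 : m z = -1 := by linear_combination h0
      rw [h3] at h1
      norm_num at h1
    have hnorm : (1:ℝ) / 2 ≤ ‖1 + m z‖ := by
      have h4 : ‖(1:ℂ)‖ ≤ ‖1 + m z‖ + ‖m z‖ := by
        calc ‖(1:ℂ)‖ = ‖(1 + m z) + (-(m z))‖ := by ring_nf
          _ ≤ ‖1 + m z‖ + ‖-(m z)‖ := norm_add_le _ _
          _ = ‖1 + m z‖ + ‖m z‖ := by rw [norm_neg]
      rw [norm_one] at h4
      linarith
    have hlz : (1 + m z)⁻¹ - 1 = -(m z) * (1 + m z)⁻¹ := by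
      field_simp
      ring
    show ‖(1 + m z)⁻¹ - 1‖ ≤ 2 * |C| * (1 + |ρ|) ^ (-(N : ℝ))
    rw [hlz]
    rw [norm_mul, norm_neg, norm_inv]
    have hinv : ‖1 + m z‖⁻¹ ≤ 2 := by
      rw [inv_le_comm₀ (lt_of_lt_of_le (by norm_num) hnorm) (by norm_num)]
      linarith
    have hP : (0:ℝ) ≤ (1 + |ρ|) ^ (-(N : ℝ)) := Real.rpow_nonneg (by positivity) _
    have hCP : (0:ℝ) ≤ C * (1 + |ρ|) ^ (-(N : ℝ)) := le_trans (norm_nonneg _) h2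
    have habs : C ≤ |C| := le_abs_self C
    have hinv0 : (0:ℝ) ≤ ‖1 + m z‖⁻¹ := by positivity
    calc ‖m z‖ * ‖1 + m z‖⁻¹ ≤ (C * (1 + |ρ|) ^ (-(N : ℝ))) * 2 := by
          apply mul_le_mul h2 hinv hinv0 hCP
      _ ≤ 2 * |C| * (1 + |ρ|) ^ (-(N : ℝ)) := by nlinarith
  · -- the inversion identity
    intro z hz
    have hzR : z ∉ R := fun h => hz (Set.mem_union_left _ h)
    have hzZ : z ∉ Z := fun h => hz (Set.mem_union_right _ (Set.mem_union_right _ h))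
    have h0 : 1 + m z ≠ 0 := fun h => hzZ ⟨hzR, h⟩
    have h1 : (1:ℂ) + ((1 + m z)⁻¹ - 1) = (1 + m z)⁻¹ := by ring
    rw [h1, mul_inv_cancel₀ h0]
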